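/- In the one-sided weakly dependent Gaussian testing setup, suppose n_1 → ∞ and n_1/n → p_1 ∈ (0, 1] as n → ∞, and let μ_{n_1} = max{μ_i : i ∈ I_1}. If lim_{n_1→∞} √(2 log n_1)/μ_{n_1} < 1, then for both the adjusted Bonferroni procedure (cutoff c_Bon(n, α)) and the Sidak procedure (cutoff c_Sid(n, α)), AnyPwr → 1 as n → ∞. -/

import Mathlib

open MeasureTheory ProbabilityTheory Filter Asymptotics Finset
open scoped Classical ENNReal NNReal
open Real

/-- The standard normal cumulative distribution function `Φ`. -/
noncomputable def Phi (x : ℝ) : ℝ := (ProbabilityTheory.gaussianReal 0 1 (Set.Iic x)).toReal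

/-- The inverse of the standard normal cdf, `Φ⁻¹`. -/
noncomputable def PhiInv : ℝ → ℝ := Function.invFun Phi

/-- The adjusted Bonferroni cutoff `c_Bon(n, α) = Φ⁻¹(1 − (−log(1−α))/n)`. -/
noncomputable def cBon (n : ℕ) (α : ℝ) : ℝ := PhiInv (1 - (-Real.log (1 - α)) / n)

/-- The Sidak cutoff `c_Sid(n, α) = Φ⁻¹((1−α)^{1/n})`. -/
noncomputable def cSid (n : ℕ) (α : ℝ) : ℝ := PhiInv ((1 - α) ^ ((1 : ℝ) / n))

lemma phi_eq (t : ℝ) : Phi t = ∫ x in Set.Iic t, gaussianPDFReal 0 1 x := by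
  rw [Phi, gaussianReal_apply_eq_integral _ one_ne_zero,
    ENNReal.toReal_ofReal (integral_nonneg (fun x => gaussianPDFReal_nonneg 0 1 x))]

lemma pdf_le_one (x : ℝ) : gaussianPDFReal 0 1 x ≤ 1 := by
  rw [gaussianPDFReal]
  have h1 : (1:ℝ) ≤ Real.sqrt (2 * π * (1:ℝ≥0)) := by
    rw [show ((1:ℝ≥0):ℝ) = 1 by simp, mul_one]
    rw [show (1:ℝ) = Real.sqrt 1 by simp]
    exact Real.sqrt_le_sqrt (by nlinarith [Real.pi_gt_three])
  have h2 : Real.exp (-(x - 0)^2 / (2 * (1:ℝ≥0))) ≤ 1 := by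
    apply Real.exp_le_one_iff.2
    have : ((1:ℝ≥0):ℝ) = 1 := by simp
    rw [this]
    nlinarith [sq_nonneg (x-0)]
  calc (Real.sqrt (2 * π * (1:ℝ≥0)))⁻¹ * Real.exp (-(x - 0)^2 / (2 * (1:ℝ≥0)))
      ≤ 1 * 1 := by
        apply mul_le_mul _ h2 (Real.exp_nonneg _) zero_le_one
        exact inv_le_one_of_one_le₀ h1
    _ = 1 := by ring

lemma phi_sub (a b : ℝ) (hab : a ≤ b) :
    Phi b - Phi a = ∫ x in Set.Ioc a b, gaussianPDFReal 0 1 x := by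
  have hint := integrable_gaussianPDFReal 0 1
  have hu : Set.Iic a ∪ Set.Ioc a b = Set.Iic b := Set.Iic_union_Ioc_eq_Iic hab
  have hdisj : Disjoint (Set.Iic a) (Set.Ioc a b) := Set.Iic_disjoint_Ioc le_rfl
  rw [phi_eq, phi_eq, ← hu, setIntegral_union hdisj measurableSet_Ioc
    hint.integrableOn hint.integrableOn]
  ring

lemma phi_strictMono : StrictMono Phi := by
  intro a b hab
  have h := phi_sub a b hab.le
  have hpos : 0 < ∫ x in Set.Ioc a b, gaussianPDFReal 0 1 x := by
    rw [setIntegral_pos_iff_support_of_nonneg_ae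
      (ae_of_all _ (fun x => gaussianPDFReal_nonneg 0 1 x))
      (integrable_gaussianPDFReal 0 1).integrableOn]
    have hsupp : Function.support (gaussianPDFReal 0 1) = Set.univ := by
      ext x; simp [Function.mem_support, (gaussianPDFReal_pos 0 1 x one_ne_zero).ne']
    rw [hsupp, Set.univ_inter]
    simp [Real.volume_Ioc, hab]
  linarith

lemma phi_lipschitz (a b : ℝ) (hab : a ≤ b) : Phi b - Phi a ≤ b - a := by
  rw [phi_sub a b hab]
  calc ∫ x in Set.Ioc a b, gaussianPDFReal 0 1 x
      ≤ ∫ _x in Set.Ioc a b, (1:ℝ) := by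
        apply setIntegral_mono_on (integrable_gaussianPDFReal 0 1).integrableOn
          (integrableOn_const (by simp [Real.volume_Ioc]))
          measurableSet_Ioc (fun x _ => pdf_le_one x)
    _ = b - a := by
        simp [Real.volume_Ioc, ENNReal.toReal_ofReal (sub_nonneg.2 hab), hab]

lemma phi_continuous : Continuous Phi := by
  apply LipschitzWith.continuous (K := 1)
  apply LipschitzWith.of_dist_le_mul
  intro a b
  rw [Real.dist_eq, Real.dist_eq]
  rcases le_total a b with h | h
  · rw [abs_sub_comm, abs_sub_comm a b, abs_of_nonneg (sub_nonneg.2 ((phi_strictMono.monotone h))),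
      abs_of_nonneg (sub_nonneg.2 h)]
    simpa using phi_lipschitz a b h
  · rw [abs_of_nonneg (sub_nonneg.2 ((phi_strictMono.monotone h))),
      abs_of_nonneg (sub_nonneg.2 h)]
    simpa using phi_lipschitz b a h

lemma phi_tendsto_atTop : Tendsto Phi atTop (nhds 1) := by
  have h := tendsto_measure_Iic_atTop (gaussianReal 0 1)
  have h1 : (gaussianReal 0 1) Set.univ = 1 := measure_univ
  rw [h1] at h
  have := (ENNReal.tendsto_toReal ENNReal.one_ne_top).comp h
  exact this

lemma phi_one_sub (x : ℝ) : ((gaussianReal 0 1) (Set.Ioi x)).toReal = 1 - Phi x := by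
  have h : Set.Ioi x = (Set.Iic x)ᶜ := by simp
  rw [h, prob_compl_eq_one_sub measurableSet_Iic,
    ENNReal.toReal_sub_of_le prob_le_one ENNReal.one_ne_top]
  simp [Phi]

lemma phi_tendsto_atBot : Tendsto Phi atBot (nhds 0) := by
  have h1 : Tendsto (fun x : ℝ => ((gaussianReal 0 1) (Set.Ici x)).toReal) atBot (nhds 1) := by
    have h := tendsto_measure_Ici_atBot (gaussianReal 0 1)
    rw [measure_univ] at h
    have := (ENNReal.tendsto_toReal ENNReal.one_ne_top).comp h
    exact this
  have h2 : Tendsto (fun x : ℝ => 1 - Phi x) atBot (nhds 1) := by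
    apply tendsto_of_tendsto_of_tendsto_of_le_of_le
      (h1.comp (tendsto_atBot_add_const_right _ (1:ℝ) tendsto_id)) tendsto_const_nhds
    · intro x
      show _ ≤ 1 - Phi x
      rw [← phi_one_sub]
      exact (ENNReal.toReal_le_toReal (measure_ne_top _ _) (measure_ne_top _ _)).2
        (measure_mono (fun y hy => by simp at hy ⊢; linarith))
    · intro x
      show 1 - Phi x ≤ (1:ℝ)
      rw [← phi_one_sub]
      exact (ENNReal.toReal_le_toReal (measure_ne_top _ _) ENNReal.one_ne_top).2 prob_le_one
  have := tendsto_const_nhds (x := (1:ℝ)) (f := atBot).sub h2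
  simpa using this

lemma phi_nonneg (x : ℝ) : 0 ≤ Phi x := ENNReal.toReal_nonneg
lemma phi_le_one (x : ℝ) : Phi x ≤ 1 :=
  (ENNReal.toReal_le_toReal (measure_ne_top _ _) ENNReal.one_ne_top).2 prob_le_one

lemma one_sub_phi_eq (t : ℝ) :
    1 - Phi t = ∫ x in Set.Ioi t, gaussianPDFReal 0 1 x := by
  rw [← phi_one_sub, gaussianReal_apply_eq_integral _ one_ne_zero,
    ENNReal.toReal_ofReal (integral_nonneg (fun x => gaussianPDFReal_nonneg 0 1 x))]

lemma hasDerivAt_negexp (x : ℝ) :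
    HasDerivAt (fun y : ℝ => -Real.exp (-(y^2)/2)) (x * Real.exp (-(x^2)/2)) x := by
  have h1 : HasDerivAt (fun y : ℝ => -(y^2)/2) (-x) x := by
    have := ((hasDerivAt_pow 2 x).neg).div_const 2
    refine this.congr_deriv ?_
    simp
    ring
  have h2 := h1.exp
  have h3 := h2.neg
  refine h3.congr_deriv ?_
  ring

lemma tendsto_negexp : Tendsto (fun y : ℝ => -Real.exp (-(y^2)/2)) atTop (nhds 0) := by
  rw [show (0:ℝ) = -0 by ring]
  apply Tendsto.neg
  apply Real.tendsto_exp_atBot.comp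
  have h0 : Tendsto (fun x : ℝ => x^2) atTop atTop := tendsto_pow_atTop two_ne_zero
  have h1 : Tendsto (fun x : ℝ => -(x^2)) atTop atBot := tendsto_neg_atTop_atBot.comp h0
  exact h1.atBot_div_const two_pos

lemma integral_xexp (t : ℝ) (ht : 0 ≤ t) :
    ∫ x in Set.Ioi t, x * Real.exp (-(x^2)/2) = Real.exp (-(t^2)/2) := by
  have := integral_Ioi_of_hasDerivAt_of_nonneg' (a := t)
    (g := fun y : ℝ => -Real.exp (-(y^2)/2)) (g' := fun x => x * Real.exp (-(x^2)/2))
    (fun x _ => hasDerivAt_negexp x)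
    (fun x hx => by
      have : (0:ℝ) < x := lt_of_le_of_lt ht hx
      positivity)
    tendsto_negexp
  rw [this]
  ring

lemma phi_tail (t : ℝ) (ht : 1 ≤ t) : 1 - Phi t ≤ Real.exp (-(t^2)/2) := by
  rw [one_sub_phi_eq, ← integral_xexp t (by linarith)]
  have hint : IntegrableOn (fun x => x * Real.exp (-(x^2)/2)) (Set.Ioi t) := by
    apply integrableOn_Ioi_deriv_of_nonneg' (fun x _ => hasDerivAt_negexp x)
      (fun x hx => by
        have : (0:ℝ) < x := lt_of_le_of_lt (by linarith) hx
        positivity)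
      tendsto_negexp
  apply setIntegral_mono_on (integrable_gaussianPDFReal 0 1).integrableOn hint
    measurableSet_Ioi
  intro x hx
  have hx1 : (1:ℝ) ≤ x := le_of_lt (lt_of_le_of_lt ht hx)
  have hpdf : gaussianPDFReal 0 1 x = (Real.sqrt (2*π))⁻¹ * Real.exp (-(x^2)/2) := by
    simp [gaussianPDFReal]
  rw [hpdf]
  have h1 : (Real.sqrt (2*π))⁻¹ ≤ 1 := by
    apply inv_le_one_of_one_le₀
    rw [show (1:ℝ) = Real.sqrt 1 by simp]
    exact Real.sqrt_le_sqrt (by nlinarith [Real.pi_gt_three])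
  have h2 : (0:ℝ) < Real.exp (-(x^2)/2) := Real.exp_pos _
  nlinarith

lemma phi_surj {y : ℝ} (h0 : 0 < y) (h1 : y < 1) : ∃ x, Phi x = y := by
  obtain ⟨a, ha⟩ := (phi_tendsto_atBot.eventually_lt_const h0).exists
  obtain ⟨b, hb⟩ := (phi_tendsto_atTop.eventually_const_lt h1).exists
  have hab : a ≤ b := le_of_lt (phi_strictMono.lt_iff_lt.1 (by linarith))
  have := intermediate_value_Icc hab phi_continuous.continuousOn
  obtain ⟨x, _, hx⟩ := this ⟨le_of_lt ha, le_of_lt hb⟩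
  exact ⟨x, hx⟩

lemma phiInv_spec {y : ℝ} (h0 : 0 < y) (h1 : y < 1) : Phi (PhiInv y) = y :=
  Function.invFun_eq (phi_surj h0 h1)

lemma phiInv_le {y t : ℝ} (h0 : 0 < y) (h1 : y < 1) (h : y ≤ Phi t) : PhiInv y ≤ t := by
  by_contra hlt
  push_neg at hlt
  have := phi_strictMono hlt
  rw [phiInv_spec h0 h1] at this
  linarith

lemma phiInv_le_of_tail {y t : ℝ} (h0 : 0 < y) (ht : 1 ≤ t)
    (h : y ≤ 1 - Real.exp (-(t^2)/2)) : PhiInv y ≤ t := by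
  have h1 : y < 1 := lt_of_le_of_lt h (by nlinarith [Real.exp_pos (-(t^2)/2)])
  exact phiInv_le h0 h1 (h.trans (by linarith [phi_tail t ht]))

lemma exp_neg_le_one_sub_half {x : ℝ} (h0 : 0 ≤ x) (h1 : x ≤ 1) :
    Real.exp (-x) ≤ 1 - x/2 := by
  have h2 : Real.exp (-x) * Real.exp x = 1 := by rw [← Real.exp_add]; simp
  nlinarith [Real.add_one_le_exp x, Real.exp_pos (-x), Real.exp_pos x,
    mul_nonneg (Real.exp_pos (-x)).le (sub_nonneg.2 (Real.add_one_le_exp x))]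

lemma tendsto_sqrt_atTop : Tendsto Real.sqrt atTop atTop :=
  tendsto_atTop_atTop_of_monotone (fun a b h => Real.sqrt_le_sqrt h)
    (fun b => ⟨b^2, by rw [Real.sqrt_sq_eq_abs]; exact le_abs_self b⟩)

-- cutoff bound lemma
lemma cutoff_bound {α : ℝ} (hα : α ∈ Set.Ioo (0:ℝ) 1) :
    ∀ᶠ n : ℕ in atTop, cBon n α ≤ Real.sqrt (2 * Real.log n) + 1 ∧
      cSid n α ≤ Real.sqrt (2 * Real.log n) + 1 := by
  obtain ⟨hα0, hα1⟩ := hα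
  set c : ℝ := -Real.log (1 - α) with hc
  have hcpos : 0 < c := by
    have : Real.log (1 - α) < 0 := Real.log_neg (by linarith) (by linarith)
    simp only [hc]; linarith
  have hlog : Tendsto (fun n : ℕ => Real.log n) atTop atTop :=
    Real.tendsto_log_atTop.comp tendsto_natCast_atTop_atTop
  have hsqrt : Tendsto (fun n : ℕ => Real.sqrt (2 * Real.log n)) atTop atTop :=
    _root_.tendsto_sqrt_atTop.comp (hlog.const_mul_atTop two_pos)
  have hexp0 : Tendsto (fun n : ℕ => Real.exp (-Real.sqrt (2 * Real.log n))) atTop (nhds 0) :=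
    Real.tendsto_exp_atBot.comp (tendsto_neg_atTop_atBot.comp hsqrt)
  have hcn : Tendsto (fun n : ℕ => c / n) atTop (nhds 0) :=
    tendsto_const_nhds.div_atTop tendsto_natCast_atTop_atTop
  filter_upwards [eventually_ge_atTop 1, hlog.eventually_ge_atTop 0,
    hexp0.eventually_le_const (by linarith : (0:ℝ) < c/2),
    hcn.eventually_lt_const (by norm_num : (0:ℝ) < 1)] with n hn1 hlogn hexpc hcn1
  have hn1R : (1:ℝ) ≤ (n:ℝ) := by exact_mod_cast hn1
  have hnpos : (0:ℝ) < n := by linarith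
  set s : ℝ := Real.sqrt (2 * Real.log n) with hs
  have hs0 : 0 ≤ s := Real.sqrt_nonneg _
  have hs2 : s^2 = 2 * Real.log n := Real.sq_sqrt (by linarith)
  set t : ℝ := s + 1 with htdef
  have ht1 : 1 ≤ t := by linarith
  have hexpt : Real.exp (-(t^2)/2) ≤ (c/2)/n := by
    have h1 : -(t^2)/2 ≤ -Real.log n + (-s) := by
      have : t^2 = s^2 + 2*s + 1 := by ring
      rw [this, hs2]; linarith
    calc Real.exp (-(t^2)/2) ≤ Real.exp (-Real.log n + (-s)) := Real.exp_le_exp.2 h1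
      _ = Real.exp (-Real.log n) * Real.exp (-s) := Real.exp_add _ _
      _ = (n:ℝ)⁻¹ * Real.exp (-s) := by rw [Real.exp_neg, Real.exp_log hnpos]
      _ ≤ (n:ℝ)⁻¹ * (c/2) := by
          apply mul_le_mul_of_nonneg_left hexpc (by positivity)
      _ = (c/2)/n := by ring
  have hcn0 : 0 < c / n := by positivity
  constructor
  · apply phiInv_le_of_tail (by linarith) ht1
    have : Real.exp (-(t^2)/2) ≤ c/n := le_trans hexpt (by
      gcongr
      linarith)
    linarith
  · have hrw : (1 - α) ^ ((1 : ℝ) / n) = Real.exp (-(c/n)) := by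
      rw [Real.rpow_def_of_pos (by linarith : (0:ℝ) < 1 - α)]
      congr 1
      simp only [hc]
      ring
    rw [cSid, hrw]
    apply phiInv_le_of_tail (Real.exp_pos _) ht1
    have h2 : Real.exp (-(c/n)) ≤ 1 - (c/n)/2 :=
      exp_neg_le_one_sub_half hcn0.le hcn1.le
    have h3 : Real.exp (-(t^2)/2) ≤ (c/n)/2 := by
      calc Real.exp (-(t^2)/2) ≤ (c/2)/n := hexpt
        _ = (c/n)/2 := by ring
    linarith


/-- `ρ_m = sup_i |ρ_{i, i+m}|`. -/
noncomputable def rhobar (ρ : ℕ → ℕ → ℝ) (m : ℕ) : ℝ := ⨆ i : ℕ, |ρ i (i + m)|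

/-- `γ = sup_{m ≥ 1} ρ_m`. -/
noncomputable def gammaSup (ρ : ℕ → ℕ → ℝ) : ℝ := ⨆ m : ℕ, rhobar ρ (m + 1)

/-- `γ_m = sup_{j ≥ m} ρ_j`. -/
noncomputable def gammaTail (ρ : ℕ → ℕ → ℝ) (m : ℕ) : ℝ := ⨆ j : {j : ℕ // m ≤ j}, rhobar ρ (j : ℕ)

/-- A weakly dependent standard Gaussian sequence: jointly Gaussian random variables,
each marginally `N(0,1)`, with correlations `ρ i j ∈ (−1,1)` for `i ≠ j`, such that
`γ = sup_{m ≥ 1} ρ_m < 1` and `ρ_m = o(1/log m)`, where `ρ_m = sup_i |ρ_{i,i+m}|`. -/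
structure IsWeakDepStdGaussian {Ω : Type*} [MeasurableSpace Ω] (P : Measure Ω)
    (X : ℕ → Ω → ℝ) (ρ : ℕ → ℕ → ℝ) : Prop where
  meas : ∀ i, Measurable (X i)
  marginal : ∀ i, P.map (X i) = gaussianReal 0 1
  jointGaussian : ∀ (s : Finset ℕ) (c : ℕ → ℝ), ∃ (m : ℝ) (v : ℝ≥0),
      P.map (fun ω => ∑ i ∈ s, c i * X i ω) = gaussianReal m v
  corr : ∀ i j, i ≠ j → ∫ ω, X i ω * X j ω ∂P = ρ i j
  corr_lt : ∀ i j, i ≠ j → |ρ i j| < 1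
  sup_lt_one : gammaSup ρ < 1
  weakDep : (fun m : ℕ => rhobar ρ m) =o[atTop] (fun m : ℕ => 1 / Real.log m)

/-- One-sided power: if `n₁ → ∞`, `n₁/n → p₁ ∈ (0,1]`, and
`lim √(2 log n₁)/μ_{n₁} < 1` where `μ_{n₁} = max{μ i : i ∈ I₁}`, then for both the adjusted
Bonferroni and Sidak procedures, `AnyPwr → 1`. -/
theorem anypwr_one_sided_max_mean
    {Ω : Type*} [MeasurableSpace Ω] (P : Measure Ω) [IsProbabilityMeasure P]
    (X : ℕ → Ω → ℝ) (μ : ℕ → ℝ) (ρ : ℕ → ℕ → ℝ)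
    (hX : IsWeakDepStdGaussian P (fun i ω => X i ω - μ i) ρ)
    (hone : ∀ i, μ i = 0 ∨ 0 < μ i)
    (α : ℝ) (hα : α ∈ Set.Ioo (0 : ℝ) 1)
    (hn1 : Tendsto
      (fun n : ℕ => ((Finset.range n).filter (fun i => 0 < μ i)).card) atTop atTop)
    (p₁ : ℝ) (hp₁ : p₁ ∈ Set.Ioc (0 : ℝ) 1)
    (hp₁lim : Tendsto
      (fun n : ℕ => ((((Finset.range n).filter (fun i => 0 < μ i)).card : ℝ) / n))
      atTop (nhds p₁))
    (hratio : ∃ L < (1 : ℝ), Tendsto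
      (fun n : ℕ =>
        Real.sqrt (2 * Real.log (((Finset.range n).filter (fun i => 0 < μ i)).card : ℝ)) /
          sSup (μ '' {i : ℕ | i < n ∧ 0 < μ i}))
      atTop (nhds L)) :
    Tendsto (fun n : ℕ => (P {ω | ∃ i < n, 0 < μ i ∧ cBon n α < X i ω}).toReal)
        atTop (nhds 1) ∧
    Tendsto (fun n : ℕ => (P {ω | ∃ i < n, 0 < μ i ∧ cSid n α < X i ω}).toReal)
        atTop (nhds 1) := by
  classical
  -- abbreviations
  have hprob : ∀ (i : ℕ) (τ : ℝ), (P {ω | τ < X i ω}).toReal = 1 - Phi (τ - μ i) := by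
    intro i τ
    have hm : Measurable (fun ω => X i ω - μ i) := hX.meas i
    have hset : {ω | τ < X i ω} = (fun ω => X i ω - μ i) ⁻¹' (Set.Ioi (τ - μ i)) := by
      ext ω
      simp only [Set.mem_setOf_eq, Set.mem_preimage, Set.mem_Ioi]
      constructor <;> intro h <;> linarith
    rw [hset, ← Measure.map_apply hm measurableSet_Ioi]
    rw [show P.map (fun ω => X i ω - μ i) = gaussianReal 0 1 from hX.marginal i]
    exact phi_one_sub _
  -- key generic lemma
  have key : ∀ τ : ℕ → ℝ, (∀ᶠ n : ℕ in atTop, τ n ≤ Real.sqrt (2 * Real.log n) + 1) →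
      Tendsto (fun n : ℕ => (P {ω | ∃ i < n, 0 < μ i ∧ τ n < X i ω}).toReal)
        atTop (nhds 1) := by
    intro τ hτ
    obtain ⟨L, hL1, hLlim⟩ := hratio
    set M : ℕ → ℝ := fun n => sSup (μ '' {i : ℕ | i < n ∧ 0 < μ i}) with hM
    set n1 : ℕ → ℕ := fun n => ((Finset.range n).filter (fun i => 0 < μ i)).card with hn1def
    set L' : ℝ := (max L 0 + 1)/2 with hL'
    have hL'0 : 0 < L' := by
      have : (0:ℝ) ≤ max L 0 := le_max_right _ _
      simp only [hL']; linarith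
    have hL'1 : L' < 1 := by
      have : max L 0 < 1 := max_lt hL1 one_pos
      simp only [hL']; linarith
    have hLL' : L < L' := by
      have : L ≤ max L 0 := le_max_left _ _
      simp only [hL']; linarith
    -- argmax exists eventually
    have hstar : ∀ᶠ n : ℕ in atTop, ∃ i, i < n ∧ 0 < μ i ∧ μ i = M n := by
      filter_upwards [hn1.eventually_ge_atTop 1] with n hn
      have hne : {i : ℕ | i < n ∧ 0 < μ i}.Nonempty := by
        obtain ⟨i, hi⟩ := Finset.card_pos.mp hn
        simp only [Finset.mem_filter, Finset.mem_range] at hi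
        exact ⟨i, hi⟩
      have hfin : {i : ℕ | i < n ∧ 0 < μ i}.Finite :=
        (Set.finite_Iio n).subset (fun i hi => hi.1)
      have hmem : M n ∈ μ '' {i : ℕ | i < n ∧ 0 < μ i} :=
        (hne.image μ).csSup_mem (hfin.image μ)
      obtain ⟨i, ⟨hi1, hi2⟩, hi3⟩ := hmem
      exact ⟨i, hi1, hi2, hi3⟩
    -- the sqrt comparison : sqrt(2 log n) - 1 ≤ sqrt (2 log n1)
    have hlog : Tendsto (fun n : ℕ => Real.log n) atTop atTop :=
      Real.tendsto_log_atTop.comp tendsto_natCast_atTop_atTop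
    have hsqrt : Tendsto (fun n : ℕ => Real.sqrt (2 * Real.log n)) atTop atTop :=
      _root_.tendsto_sqrt_atTop.comp (hlog.const_mul_atTop two_pos)
    obtain ⟨hp₁0, hp₁1⟩ := hp₁
    have hsq : ∀ᶠ n : ℕ in atTop,
        Real.sqrt (2 * Real.log n) - 1 ≤ Real.sqrt (2 * Real.log (n1 n)) := by
      filter_upwards [eventually_ge_atTop 1, hlog.eventually_ge_atTop 0,
        hsqrt.eventually_ge_atTop (max 1 ((1 - 2 * Real.log (p₁/2))/2)),
        hp₁lim.eventually_const_lt (by linarith : p₁/2 < p₁)] with n hn1' hlogn hs hpn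
      have hnR : (1:ℝ) ≤ (n:ℝ) := by exact_mod_cast hn1'
      set s : ℝ := Real.sqrt (2 * Real.log n) with hsdef
      have hs1 : 1 ≤ s := le_trans (le_max_left _ _) hs
      have hs2 : (1 - 2 * Real.log (p₁/2))/2 ≤ s := le_trans (le_max_right _ _) hs
      have hssq : s^2 = 2 * Real.log n := Real.sq_sqrt (by linarith)
      -- n1 n ≥ p₁/2 * n
      have hp2 : p₁/2 * (n:ℝ) ≤ (n1 n : ℝ) := by
        have h : p₁/2 ≤ (n1 n : ℝ) / n := hpn.le
        rwa [le_div_iff₀ (by linarith : (0:ℝ) < (n:ℝ))] at h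
      have hlogle : Real.log (p₁/2) + Real.log n ≤ Real.log (n1 n) := by
        have h1 : Real.log (p₁/2 * n) ≤ Real.log (n1 n) :=
          Real.log_le_log (by positivity) hp2
        rwa [Real.log_mul (by positivity) (by linarith : (n:ℝ) ≠ 0)] at h1
      apply Real.le_sqrt_of_sq_le
      have : (s - 1)^2 = s^2 - 2*s + 1 := by ring
      rw [this, hssq]
      linarith
    -- M lower bound
    have hMlb : ∀ᶠ n : ℕ in atTop,
        (Real.sqrt (2 * Real.log n) - 1)/L' ≤ M n := by
      filter_upwards [hstar, hsq,
        hLlim.eventually_lt_const hLL'] with n hstarn hsqn hratn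
      obtain ⟨i, hi1, hi2, hi3⟩ := hstarn
      have hMpos : 0 < M n := hi3 ▸ hi2
      have hratn' : Real.sqrt (2 * Real.log (n1 n)) / M n < L' := hratn
      rw [div_lt_iff₀ hMpos] at hratn'
      rw [div_le_iff₀ hL'0]
      nlinarith [hsqn, hratn']
    -- tendsto atBot of τ n - M n
    have hbot : Tendsto (fun n : ℕ => τ n - M n) atTop atBot := by
      apply tendsto_atBot_mono' atTop (f₁ := fun n : ℕ =>
        Real.sqrt (2 * Real.log n) * (1 - 1/L') + (1 + 1/L'))
      · filter_upwards [hτ, hMlb] with n h1 h2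
        have : Real.sqrt (2 * Real.log n) * (1 - 1/L') + (1 + 1/L')
            = (Real.sqrt (2 * Real.log n) + 1) - (Real.sqrt (2 * Real.log n) - 1)/L' := by
          field_simp
          ring
        rw [this]
        linarith
      · apply tendsto_atBot_add_const_right
        apply hsqrt.atTop_mul_const_of_neg
        have : 1 < 1/L' := by
          rw [lt_div_iff₀ hL'0]
          linarith
        linarith
    have hPhi0 : Tendsto (fun n : ℕ => Phi (τ n - M n)) atTop (nhds 0) :=
      phi_tendsto_atBot.comp hbot
    -- squeeze
    apply tendsto_of_tendsto_of_tendsto_of_le_of_le'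
      (g := fun n : ℕ => 1 - Phi (τ n - M n)) (h := fun _ : ℕ => (1:ℝ))
    · have := (tendsto_const_nhds (x := (1:ℝ)) (f := atTop (α := ℕ))).sub hPhi0
      simpa using this
    · exact tendsto_const_nhds
    · filter_upwards [hstar] with n hstarn
      obtain ⟨i, hi1, hi2, hi3⟩ := hstarn
      have hsub : {ω | τ n < X i ω} ⊆ {ω | ∃ i < n, 0 < μ i ∧ τ n < X i ω} :=
        fun ω h => ⟨i, hi1, hi2, h⟩
      calc (1:ℝ) - Phi (τ n - M n) = (P {ω | τ n < X i ω}).toReal := by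
            rw [hprob i (τ n), hi3]
        _ ≤ (P {ω | ∃ i < n, 0 < μ i ∧ τ n < X i ω}).toReal :=
            (ENNReal.toReal_le_toReal (measure_ne_top _ _) (measure_ne_top _ _)).2
              (measure_mono hsub)
    · filter_upwards with n
      exact (ENNReal.toReal_le_toReal (measure_ne_top _ _) ENNReal.one_ne_top).2 prob_le_one
  have hcut := cutoff_bound hα
  constructor
  · exact key (fun n => cBon n α) (hcut.mono (fun n h => h.1))
  · exact key (fun n => cSid n α) (hcut.mono (fun n h => h.2))
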